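/- (Monotone subsequence trick) Let (H_n) be a nondecreasing sequence of random variables and c > 0 a constant. Suppose for every ε > 0, Pr[|H_n/log n − c| > ε] = O(exp(−Θ((log log n)²))). Then H_n/log n → c almost surely. -/

import Mathlib

open MeasureTheory ProbabilityTheory Filter

/-- The subsequence `n_k = 2^(k^2)`. -/
def mseq (k : ℕ) : ℕ := 2 ^ (k ^ 2)

lemma mseq_pos (k : ℕ) : 0 < mseq k := Nat.pow_pos (by norm_num)

lemma log_mseq (k : ℕ) : Real.log (mseq k) = (k : ℝ) ^ 2 * Real.log 2 := by
  rw [mseq]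
  push_cast
  rw [Real.log_pow]
  push_cast
  ring

lemma one_lt_mseq {k : ℕ} (hk : 1 ≤ k) : 1 < mseq k := by
  have : 2 ^ 1 ≤ 2 ^ (k ^ 2) := Nat.pow_le_pow_right (by norm_num) (by nlinarith)
  calc 1 < 2 ^ 1 := by norm_num
    _ ≤ _ := this

lemma log_mseq_pos {k : ℕ} (hk : 1 ≤ k) : 0 < Real.log (mseq k) := by
  apply Real.log_pos
  exact_mod_cast one_lt_mseq hk

/-- For `j ≥ 2`, `log j ≤ log log (mseq j)` and `0 ≤ log j`. -/
lemma log_le_loglog_mseq {j : ℕ} (hj : 2 ≤ j) :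
    Real.log (j : ℝ) ≤ Real.log (Real.log (mseq j)) ∧ 0 ≤ Real.log (j : ℝ) := by
  have hj1 : (1:ℝ) ≤ (j : ℝ) := by exact_mod_cast Nat.one_le_of_lt hj
  have hlog2 : (0.6931471803 : ℝ) < Real.log 2 := Real.log_two_gt_d9
  have hjpos : (0:ℝ) < (j:ℝ) := by linarith
  constructor
  · rw [log_mseq, Real.log_mul (by positivity) (by positivity), Real.log_pow]
    have h1 : 0 ≤ Real.log ((j:ℝ) * Real.log 2) := by
      apply Real.log_nonneg
      have : (2:ℝ) ≤ (j:ℝ) := by exact_mod_cast hj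
      nlinarith
    rw [Real.log_mul (by positivity) (by linarith)] at h1
    push_cast
    linarith
  · exact Real.log_nonneg hj1

/-- Summability of `exp (-a (log (k+2))^2)`. -/
lemma summable_exp_neg_log_sq {a : ℝ} (ha : 0 < a) :
    Summable (fun k : ℕ => Real.exp (-a * (Real.log ((k : ℝ) + 2)) ^ 2)) := by
  have hg : Summable (fun k : ℕ => 1 / ((k : ℝ) + 2) ^ 2) := by
    have base : Summable (fun n : ℕ => 1 / (n : ℝ) ^ 2) :=
      Real.summable_one_div_nat_pow.mpr one_lt_two
    have := (summable_nat_add_iff 2).mpr base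
    apply this.congr
    intro k
    push_cast
    ring
  apply summable_of_isBigO_nat hg
  apply Asymptotics.IsBigO.of_bound 1
  have hev : ∀ᶠ k : ℕ in atTop, 2 / a ≤ Real.log ((k : ℝ) + 2) := by
    have h1 : Tendsto (fun k : ℕ => (k : ℝ) + 2) atTop atTop :=
      tendsto_atTop_add_const_right _ _ tendsto_natCast_atTop_atTop
    exact (Real.tendsto_log_atTop.comp h1).eventually_ge_atTop _
  filter_upwards [hev] with k hk
  set L := Real.log ((k : ℝ) + 2) with hL
  have hkpos : (0:ℝ) < (k : ℝ) + 2 := by positivity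
  have hLpos : 0 < L := lt_of_lt_of_le (by positivity) hk
  have haL : 2 ≤ a * L := by
    rw [div_le_iff₀ ha] at hk
    linarith [hk]
  have h2 : Real.exp (-a * L ^ 2) ≤ Real.exp (-(2 * L)) := by
    apply Real.exp_le_exp.mpr
    nlinarith [mul_le_mul_of_nonneg_right haL hLpos.le]
  have h3 : Real.exp (-(2 * L)) = 1 / ((k : ℝ) + 2) ^ 2 := by
    rw [Real.exp_neg]
    have : Real.exp ((2:ℕ) * L) = Real.exp L ^ (2:ℕ) := Real.exp_nat_mul L 2
    rw [show (2:ℝ) * L = ((2:ℕ):ℝ) * L by norm_num, this, hL, Real.exp_log hkpos]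
    rw [one_div]
  rw [Real.norm_eq_abs, Real.norm_eq_abs, abs_of_nonneg (Real.exp_nonneg _),
    abs_of_nonneg (by positivity), one_mul]
  linarith

lemma ratio_sq_tendsto :
    Tendsto (fun k : ℕ => (k : ℝ) ^ 2 / ((k : ℝ) + 1) ^ 2) atTop (nhds 1) := by
  have h1 : Tendsto (fun k : ℕ => (k : ℝ) / ((k : ℝ) + 1)) atTop (nhds 1) := by
    have h0 := tendsto_one_div_add_atTop_nhds_zero_nat (𝕜 := ℝ)
    have h2 : Tendsto (fun k : ℕ => 1 - 1 / ((k : ℝ) + 1)) atTop (nhds (1 - 0)) :=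
      tendsto_const_nhds.sub h0
    rw [sub_zero] at h2
    apply h2.congr
    intro k
    have : ((k : ℝ) + 1) ≠ 0 := by positivity
    field_simp
    ring
  have := h1.mul h1
  rw [mul_one] at this
  apply this.congr
  intro k
  rw [div_mul_div_comm, ← pow_two, ← pow_two]

lemma ratio_sq_tendsto' :
    Tendsto (fun k : ℕ => ((k : ℝ) + 1) ^ 2 / (k : ℝ) ^ 2) atTop (nhds 1) := by
  have := ratio_sq_tendsto.inv₀ one_ne_zero
  rw [inv_one] at this
  apply this.congr
  intro k
  rw [inv_div]

/-- kk n = Nat.sqrt (Nat.log 2 n), the index of the bracketing subsequence term. -/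
def kk (n : ℕ) : ℕ := Nat.sqrt (Nat.log 2 n)

lemma mseq_kk_le {n : ℕ} (hn : 1 ≤ n) : mseq (kk n) ≤ n := by
  have h1 : (kk n) ^ 2 ≤ Nat.log 2 n := Nat.sqrt_le' _
  calc mseq (kk n) = 2 ^ ((kk n) ^ 2) := rfl
    _ ≤ 2 ^ (Nat.log 2 n) := Nat.pow_le_pow_right (by norm_num) h1
    _ ≤ n := Nat.pow_log_le_self 2 (by omega)

lemma lt_mseq_kk_succ (n : ℕ) : n < mseq (kk n + 1) := by
  have h1 : Nat.log 2 n < (kk n + 1) ^ 2 := Nat.lt_succ_sqrt' _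
  calc n < 2 ^ (Nat.log 2 n + 1) := Nat.lt_pow_succ_log_self (by norm_num) n
    _ ≤ 2 ^ ((kk n + 1) ^ 2) := Nat.pow_le_pow_right (by norm_num) (by omega)

lemma kk_tendsto : Tendsto kk atTop atTop := by
  apply tendsto_atTop_atTop.mpr
  intro b
  refine ⟨mseq b, fun n hn => ?_⟩
  have hn0 : n ≠ 0 := by have := mseq_pos b; omega
  have h1 : b ^ 2 ≤ Nat.log 2 n := (Nat.le_log_iff_pow_le (by norm_num) hn0).mpr hn
  exact Nat.le_sqrt.mpr (by nlinarith [Nat.sqrt_le (Nat.log 2 n)])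

/-- Deterministic step: monotonicity plus convergence along the subsequence gives
full convergence. -/
lemma det_lemma {f : ℕ → ℝ} (hf : Monotone f) {c : ℝ} (hc : 0 < c)
    (h : Tendsto (fun k => f (mseq k) / Real.log (mseq k)) atTop (nhds c)) :
    Tendsto (fun n : ℕ => f n / Real.log n) atTop (nhds c) := by
  -- eventually f (mseq k) ≥ 0
  have hpos : ∀ᶠ k in atTop, 0 ≤ f (mseq k) := by
    have h2 : ∀ᶠ k in atTop, c / 2 < f (mseq k) / Real.log (mseq k) :=
      h.eventually_const_lt (by linarith)
    filter_upwards [h2, eventually_ge_atTop 1] with k hk hk1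
    have hL := log_mseq_pos hk1
    have h3 := (lt_div_iff₀ hL).mp hk
    nlinarith [mul_pos (half_pos hc) hL]
  obtain ⟨K, hK⟩ := eventually_atTop.mp (hpos.and (eventually_ge_atTop 1))
  -- the two bracketing sequences tend to c
  have hG : Tendsto (fun k : ℕ => f (mseq k) / Real.log (mseq (k + 1))) atTop (nhds c) := by
    have h1 := h.mul ratio_sq_tendsto
    rw [mul_one] at h1
    apply h1.congr'
    filter_upwards [eventually_ge_atTop 1] with k hk
    have hk0 : (k : ℝ) ≠ 0 := by positivity
    have hl2 : Real.log 2 ≠ 0 := ne_of_gt (Real.log_pos one_lt_two)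
    rw [log_mseq, log_mseq]
    push_cast
    field_simp
  have hH : Tendsto (fun k : ℕ => f (mseq (k + 1)) / Real.log (mseq k)) atTop (nhds c) := by
    have hshift : Tendsto (fun k : ℕ => f (mseq (k + 1)) / Real.log (mseq (k + 1)))
        atTop (nhds c) := h.comp (tendsto_add_atTop_nat 1)
    have h1 := hshift.mul ratio_sq_tendsto'
    rw [mul_one] at h1
    apply h1.congr'
    filter_upwards [eventually_ge_atTop 1] with k hk
    have hk0 : (k : ℝ) ≠ 0 := by positivity
    have hl2 : Real.log 2 ≠ 0 := ne_of_gt (Real.log_pos one_lt_two)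
    rw [log_mseq, log_mseq]
    push_cast
    field_simp
  apply tendsto_of_tendsto_of_tendsto_of_le_of_le' (hG.comp kk_tendsto) (hH.comp kk_tendsto)
  · -- lower bound
    filter_upwards [kk_tendsto.eventually_ge_atTop (K + 1), eventually_ge_atTop 2]
      with n hkn hn2
    set k := kk n with hkdef
    have hk1 : 1 ≤ k := by omega
    obtain ⟨hfk, -⟩ := hK k (by omega)
    have hmn : mseq k ≤ n := mseq_kk_le (by omega)
    have hnm : n < mseq (k + 1) := lt_mseq_kk_succ n
    have hln_pos : (0:ℝ) < Real.log n := Real.log_pos (by exact_mod_cast hn2)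
    have hlog_le2 : Real.log n ≤ Real.log (mseq (k + 1)) := by
      apply Real.log_le_log (by positivity)
      exact_mod_cast hnm.le
    show f (mseq k) / Real.log (mseq (k + 1)) ≤ f n / Real.log n
    exact div_le_div₀ (le_trans hfk (hf hmn)) (hf hmn) hln_pos hlog_le2
  · -- upper bound
    filter_upwards [kk_tendsto.eventually_ge_atTop (K + 1), eventually_ge_atTop 2]
      with n hkn hn2
    set k := kk n with hkdef
    have hk1 : 1 ≤ k := by omega
    obtain ⟨hfk1, -⟩ := hK (k + 1) (by omega)
    have hmn : mseq k ≤ n := mseq_kk_le (by omega)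
    have hnm : n < mseq (k + 1) := lt_mseq_kk_succ n
    have hlk_pos := log_mseq_pos hk1
    have hlog_le1 : Real.log (mseq k) ≤ Real.log n := by
      apply Real.log_le_log (by exact_mod_cast mseq_pos k)
      exact_mod_cast hmn
    show f n / Real.log n ≤ f (mseq (k + 1)) / Real.log (mseq k)
    exact div_le_div₀ hfk1 (hf hnm.le) hlk_pos hlog_le1

/-- Monotone subsequence trick: if `(H_n)` is pointwise nondecreasing and for every
`ε > 0` there are `A, a > 0` with
`Pr[|H_n/log n - c| > ε] ≤ A exp(-a (log log n)²)` for all `n ≥ 3`, then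
`H_n / log n → c` almost surely. -/
theorem monotone_subsequence_trick {Ω : Type*} [MeasureSpace Ω]
    [IsProbabilityMeasure (ℙ : Measure Ω)]
    (H : ℕ → Ω → ℝ) (c : ℝ) (hc : 0 < c)
    (hmono : ∀ ω, Monotone fun n => H n ω)
    (hbound : ∀ ε : ℝ, 0 < ε → ∃ A a : ℝ, 0 < A ∧ 0 < a ∧ ∀ n : ℕ, 3 ≤ n →
      ℙ {ω | ε < |H n ω / Real.log n - c|} ≤
        ENNReal.ofReal (A * Real.exp (-a * (Real.log (Real.log n)) ^ 2))) :
    ∀ᵐ ω ∂(ℙ : Measure Ω),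
      Tendsto (fun n : ℕ => H n ω / Real.log n) atTop (nhds c) := by
  have key : ∀ j : ℕ, ∀ᵐ ω ∂(ℙ : Measure Ω), ∀ᶠ k in atTop,
      ω ∉ {ω' | 1 / ((j : ℝ) + 1) <
        |H (mseq (k + 2)) ω' / Real.log (mseq (k + 2)) - c|} := by
    intro j
    obtain ⟨A, a, hA, ha, hb⟩ := hbound (1 / ((j : ℝ) + 1)) (by positivity)
    apply ae_eventually_notMem
    have hsum : Summable (fun k : ℕ => A * Real.exp (-a * (Real.log ((k : ℝ) + 2)) ^ 2)) :=
      (summable_exp_neg_log_sq ha).mul_left A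
    have hbd : ∀ k : ℕ,
        ℙ {ω' | 1 / ((j : ℝ) + 1) <
            |H (mseq (k + 2)) ω' / Real.log (mseq (k + 2)) - c|} ≤
          ENNReal.ofReal (A * Real.exp (-a * (Real.log ((k : ℝ) + 2)) ^ 2)) := by
      intro k
      have hm3 : 3 ≤ mseq (k + 2) := by
        calc 3 ≤ 2 ^ (2 ^ 2) := by norm_num
          _ ≤ 2 ^ ((k + 2) ^ 2) := Nat.pow_le_pow_right (by norm_num)
              (Nat.pow_le_pow_left (by omega) 2)
          _ = mseq (k + 2) := rfl
      refine le_trans (hb (mseq (k + 2)) hm3) (ENNReal.ofReal_le_ofReal ?_)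
      apply mul_le_mul_of_nonneg_left _ hA.le
      apply Real.exp_le_exp.mpr
      obtain ⟨h1, h2⟩ := log_le_loglog_mseq (show 2 ≤ k + 2 by omega)
      have h2' : (0:ℝ) ≤ Real.log ((k : ℝ) + 2) := by
        have : ((k + 2 : ℕ) : ℝ) = (k : ℝ) + 2 := by push_cast; ring
        rw [← this]; exact h2
      have h1' : Real.log ((k : ℝ) + 2) ≤ Real.log (Real.log (mseq (k + 2))) := by
        have : ((k + 2 : ℕ) : ℝ) = (k : ℝ) + 2 := by push_cast; ring
        rw [← this]; exact h1
      have hsq : (Real.log ((k : ℝ) + 2)) ^ 2 ≤ (Real.log (Real.log (mseq (k + 2)))) ^ 2 :=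
        pow_le_pow_left₀ h2' h1' 2
      nlinarith
    refine ne_top_of_le_ne_top (@ENNReal.ofReal_ne_top
      (∑' k : ℕ, A * Real.exp (-a * (Real.log ((k : ℝ) + 2)) ^ 2))) ?_
    calc (∑' k : ℕ, ℙ {ω' | 1 / ((j : ℝ) + 1) <
            |H (mseq (k + 2)) ω' / Real.log (mseq (k + 2)) - c|})
        ≤ ∑' k : ℕ, ENNReal.ofReal (A * Real.exp (-a * (Real.log ((k : ℝ) + 2)) ^ 2)) :=
          ENNReal.tsum_le_tsum hbd
      _ = ENNReal.ofReal (∑' k : ℕ, A * Real.exp (-a * (Real.log ((k : ℝ) + 2)) ^ 2)) :=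
          (ENNReal.ofReal_tsum_of_nonneg (fun k => by positivity) hsum).symm
  have key2 : ∀ᵐ ω ∂(ℙ : Measure Ω),
      Tendsto (fun k : ℕ => H (mseq k) ω / Real.log (mseq k)) atTop (nhds c) := by
    filter_upwards [ae_all_iff.mpr key] with ω hω
    rw [Metric.tendsto_atTop]
    intro ε hε
    obtain ⟨j, hj⟩ := exists_nat_one_div_lt hε
    obtain ⟨N, hN⟩ := eventually_atTop.mp (hω j)
    refine ⟨N + 2, fun k hk => ?_⟩
    have := hN (k - 2) (by omega)
    rw [show k - 2 + 2 = k by omega] at this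
    rw [Real.dist_eq]
    calc |H (mseq k) ω / Real.log (mseq k) - c| ≤ 1 / ((j : ℝ) + 1) := not_lt.mp this
      _ < ε := hj
  filter_upwards [key2] with ω hω
  exact det_lemma (hmono ω) hc hω
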